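/- Let λ : ℕ → ℂ satisfy λ(0) = 1 and the Hecke relation λ(α+β) = λ(α)·λ(β) − λ(α−1)·λ(β−1) for all integers α, β ≥ 1. Assume there are constants C ≥ 0 and R ≥ 1 such that |λ(n)| ≤ C·R^n for all n ∈ ℕ, and let x ∈ ℂ with |x| < R^(−2) (so all series below converge absolutely). Then for every integer b ≥ 1 one has (1 + x) · ∑_{j=0}^{∞} λ(b+2j)·x^j = (λ(b) − x·λ*(b−2)) · ∑_{j=0}^{∞} λ(2j)·x^j, where λ*(b−2) := λ(b−2) for b ≥ 2 and λ*(−1) := 0; in particular for b = 1 the identity reads (1+x)·∑_{j≥0} λ(1+2j)·x^j = λ(1)·∑_{j≥0} λ(2j)·x^j. -/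

import Mathlib

/-- Local Hecke computation (Lemma `lemma:local`): for a sequence satisfying the
Hecke relation and polynomial-type growth, the generating series identity
`(1 + x) · ∑_{j≥0} λ(b+2j) x^j = (λ(b) − x·λ(b−2)) · ∑_{j≥0} λ(2j) x^j` holds
for every `b ≥ 1`, with `λ(b−2)` interpreted as `0` when `b = 1`. -/
theorem hecke_local_series_identity
    (lam : ℕ → ℂ) (h0 : lam 0 = 1)
    (hHecke : ∀ α β : ℕ, 1 ≤ α → 1 ≤ β →
      lam (α + β) = lam α * lam β - lam (α - 1) * lam (β - 1))
    (C R : ℝ) (hC : 0 ≤ C) (hR : 1 ≤ R)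
    (hgrowth : ∀ n : ℕ, ‖lam n‖ ≤ C * R ^ n)
    (x : ℂ) (hx : ‖x‖ < R ^ (-2 : ℤ)) :
    ∀ b : ℕ, 1 ≤ b →
      (1 + x) * ∑' j : ℕ, lam (b + 2 * j) * x ^ j
        = (lam b - x * (if 2 ≤ b then lam (b - 2) else 0)) *
            ∑' j : ℕ, lam (2 * j) * x ^ j := by
  intro b hb
  have hR0 : (0 : ℝ) < R := lt_of_lt_of_le one_pos hR
  set r : ℝ := R ^ 2 * ‖x‖ with hrdef
  have hr0 : 0 ≤ r := by positivity
  have hr1 : r < 1 := by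
    have h2 : (R : ℝ) ^ (-2 : ℤ) = (R ^ 2)⁻¹ := by
      rw [zpow_neg]
      norm_cast
    have hR2 : (0 : ℝ) < R ^ 2 := by positivity
    have := (mul_lt_mul_of_pos_left (lt_of_lt_of_le hx (le_of_eq h2)) hR2)
    calc r < R ^ 2 * (R ^ 2)⁻¹ := this
      _ = 1 := mul_inv_cancel₀ (ne_of_gt hR2)
  -- basic summability
  have hs : ∀ a : ℕ, Summable (fun k : ℕ => lam (a + 2 * k) * x ^ k) := by
    intro a
    apply Summable.of_norm_bounded
      ((summable_geometric_of_lt_one hr0 hr1).mul_left (C * R ^ a))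
    intro k
    have hg := hgrowth (a + 2 * k)
    have hxk : ‖x ^ k‖ = ‖x‖ ^ k := by
      simp
    calc ‖lam (a + 2 * k) * x ^ k‖
        = ‖lam (a + 2 * k)‖ * ‖x‖ ^ k := by
          rw [norm_mul, hxk]
      _ ≤ (C * R ^ (a + 2 * k)) * ‖x‖ ^ k := by
          apply mul_le_mul_of_nonneg_right hg (by positivity)
      _ = (C * R ^ a) * r ^ k := by
          rw [hrdef, pow_add, pow_mul, mul_pow]; ring
  -- summability of shifted versions
  have hs' : ∀ a : ℕ, Summable (fun k : ℕ => lam (a + 2 * k) * x ^ (k + 1)) := by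
    intro a
    have h := (hs a).mul_right x
    convert h using 2 with k
    · rfl
    ring
  set c : ℂ := (if 2 ≤ b then lam (b - 2) else 0) with hc
  -- termwise key identity
  have key : ∀ k : ℕ, lam (b + 2 * (k + 1)) + lam (b + 2 * k)
      = lam b * lam (2 * (k + 1)) - c * lam (2 * k) := by
    intro k
    have h1 := hHecke b (2 * (k + 1)) hb (by omega)
    have e1 : 2 * (k + 1) - 1 = 2 * k + 1 := by omega
    rw [e1] at h1
    rcases Nat.lt_or_ge b 2 with h | h
    · have hb1 : b = 1 := by omega
      subst hb1
      rw [hc]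
      simp only [if_neg (by omega : ¬ (2 : ℕ) ≤ 1)]
      have e2 : (1 : ℕ) - 1 = 0 := rfl
      rw [e2, h0] at h1
      have e3 : (2 * k + 1 : ℕ) = 1 + 2 * k := by omega
      rw [e3] at h1
      linear_combination h1
    · have h2 := hHecke (b - 1) (2 * k + 1) (by omega) (by omega)
      have e4 : b - 1 + (2 * k + 1) = b + 2 * k := by omega
      have e5 : b - 1 - 1 = b - 2 := by omega
      have e6 : 2 * k + 1 - 1 = 2 * k := by omega
      rw [e4, e5, e6] at h2
      rw [hc]
      simp only [if_pos h]
      linear_combination h1 + h2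
  -- named sums
  have sum1 : Summable (fun k : ℕ => lam (b + 2 * (k + 1)) * x ^ (k + 1)) := by
    have heq : ∀ k : ℕ, b + 2 * (k + 1) = (b + 2) + 2 * k := fun k => by omega
    simpa only [heq] using hs' (b + 2)
  have sum2 : Summable (fun k : ℕ => lam (b + 2 * k) * x ^ (k + 1)) := hs' b
  have sum4 : Summable (fun k : ℕ => c * (lam (2 * k) * x ^ (k + 1))) := by
    have h := (hs' 0).mul_left c
    convert h using 3 with k
    · rfl
    norm_num
  -- the tsum identity T1 + T2 + T4 = T3
  have e7 : (∑' k : ℕ, lam (b + 2 * (k + 1)) * x ^ (k + 1))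
      + (∑' k : ℕ, lam (b + 2 * k) * x ^ (k + 1))
      + (∑' k : ℕ, c * (lam (2 * k) * x ^ (k + 1)))
      = ∑' k : ℕ, lam b * (lam (2 * (k + 1)) * x ^ (k + 1)) := by
    rw [← Summable.tsum_add sum1 sum2, ← Summable.tsum_add (sum1.add sum2) sum4]
    apply tsum_congr
    intro k
    linear_combination (key k) * x ^ (k + 1)
  -- rewrite A and B via the head term
  have e1 : (∑' j : ℕ, lam (b + 2 * j) * x ^ j)
      = lam b + ∑' k : ℕ, lam (b + 2 * (k + 1)) * x ^ (k + 1) := by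
    rw [Summable.tsum_eq_zero_add (hs b)]
    norm_num
  have e3 : (∑' j : ℕ, lam (2 * j) * x ^ j)
      = 1 + ∑' k : ℕ, lam (2 * (k + 1)) * x ^ (k + 1) := by
    have h := Summable.tsum_eq_zero_add (f := fun j : ℕ => lam (2 * j) * x ^ j) ?_
    · rw [h]; norm_num [h0]
    · have := hs 0
      simpa using this
  have e2 : x * (∑' j : ℕ, lam (b + 2 * j) * x ^ j)
      = ∑' k : ℕ, lam (b + 2 * k) * x ^ (k + 1) := by
    rw [← tsum_mul_left]
    apply tsum_congr
    intro k
    ring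
  have e4 : x * (∑' j : ℕ, lam (2 * j) * x ^ j)
      = ∑' k : ℕ, lam (2 * k) * x ^ (k + 1) := by
    rw [← tsum_mul_left]
    apply tsum_congr
    intro k
    ring
  have e5 : c * (∑' k : ℕ, lam (2 * k) * x ^ (k + 1))
      = ∑' k : ℕ, c * (lam (2 * k) * x ^ (k + 1)) := (tsum_mul_left).symm
  have e6 : lam b * (∑' k : ℕ, lam (2 * (k + 1)) * x ^ (k + 1))
      = ∑' k : ℕ, lam b * (lam (2 * (k + 1)) * x ^ (k + 1)) := (tsum_mul_left).symm
  linear_combination e1 + e2 - lam b * e3 + c * e4 + e5 - e6 + e7
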